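/- Suppose E[V − τ] < 0, so that M_∞ is P-a.s. finite. If W : Ω → [0,∞) is a measurable random variable with W ≤ M_∞ P-a.s., then for every n ≥ 0, Z_n^W ≤ M_∞ ∘ θ^n P-a.s., where Z_0^W = W and Z_{n+1}^W(ω) = φ( Z_n^W(ω), θ^n ω ). -/
import Mathlib


open MeasureTheory Filter

noncomputable section

variable {Ω : Type*}

/-- ψ(y, ω) = max( max( y + V ω, σ ω + D ω + V ω ) − τ ω, 0 ). -/
def psi (σ D V τ : Ω → ℝ) (y : ℝ) (ω : Ω) : ℝ :=
  max (max (y + V ω) (σ ω + D ω + V ω) - τ ω) 0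

/-- φ(x, ω): the one-step workload map, defined by its four cases:
x + σ − τ if x + σ − τ > 0 and x ≤ D; x − τ if x − τ > 0 and x > D;
max(x + σ + V − τ, 0) if x + σ − τ ≤ 0 and x ≤ D; 0 if x − τ ≤ 0 and x > D. -/
def phi (σ D V τ : Ω → ℝ) (x : ℝ) (ω : Ω) : ℝ :=
  if x ≤ D ω then
    if 0 < x + σ ω - τ ω then x + σ ω - τ ω else max (x + σ ω + V ω - τ ω) 0
  else
    if 0 < x - τ ω then x - τ ω else 0

/-- S_j(ω) = σ(θ^{-j}ω) + D(θ^{-j}ω) + Σ_{i=1}^{j} V(θ^{-i}ω) − Σ_{i=1}^{j} τ(θ^{-i}ω),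
where `θi` denotes the inverse of `θ`. -/
def Sj (θi : Ω → Ω) (σ D V τ : Ω → ℝ) (j : ℕ) (ω : Ω) : ℝ :=
  σ (θi^[j] ω) + D (θi^[j] ω)
    + ∑ i ∈ Finset.Icc 1 j, V (θi^[i] ω)
    - ∑ i ∈ Finset.Icc 1 j, τ (θi^[i] ω)

/-- M_∞ = max(0, sup_{j ≥ 1} S_j) ∈ [0,∞]. -/
def Minf (θi : Ω → Ω) (σ D V τ : Ω → ℝ) (ω : Ω) : EReal :=
  max 0 (⨆ j : ℕ, ((Sj θi σ D V τ (j + 1) ω : ℝ) : EReal))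

/-- The workload sequence Z_0^W = W, Z_{n+1}^W(ω) = φ(Z_n^W(ω), θⁿω). -/
def Zseq (θf : Ω → Ω) (σ D V τ : Ω → ℝ) (W : Ω → ℝ) : ℕ → Ω → ℝ
  | 0 => W
  | n + 1 => fun ω => phi σ D V τ (Zseq θf σ D V τ W n ω) (θf^[n] ω)

/-- The majorizing sequence Y_0^Y = Y, Y_{n+1}^Y(ω) = ψ(Y_n^Y(ω), θⁿω). -/
def Yseq (θf : Ω → Ω) (σ D V τ : Ω → ℝ) (Y : Ω → ℝ) : ℕ → Ω → ℝ
  | 0 => Y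
  | n + 1 => fun ω => psi σ D V τ (Yseq θf σ D V τ Y n ω) (θf^[n] ω)

lemma EReal_sup_add_aux (x c : ℝ) (a : ℕ → ℝ) (t : EReal)
    (hx : (x : EReal) ≤ ⨆ j, ((a j : ℝ) : EReal))
    (h : ∀ j, ((a j + c : ℝ) : EReal) ≤ t) :
    ((x + c : ℝ) : EReal) ≤ t := by
  induction t using EReal.rec with
  | bot => exact absurd (h 0) (by simp)
  | coe r =>
    have hb : ∀ j, a j ≤ r - c := fun j => by
      have := EReal.coe_le_coe_iff.mp (h j); linarith
    have hxr : (x : EReal) ≤ ((r - c : ℝ) : EReal) :=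
      hx.trans (iSup_le fun j => EReal.coe_le_coe_iff.mpr (hb j))
    have := EReal.coe_le_coe_iff.mp hxr
    exact EReal.coe_le_coe_iff.mpr (by linarith)
  | top => exact le_top

lemma iter_symm_shift [MeasurableSpace Ω] (θ : Ω ≃ᵐ Ω) (k : ℕ) (ω : Ω) :
    (⇑θ.symm)^[k + 1] (θ ω) = (⇑θ.symm)^[k] ω := by
  rw [Function.iterate_succ_apply]
  simp

lemma sum_symm_shift [MeasurableSpace Ω] (θ : Ω ≃ᵐ Ω) (f : Ω → ℝ) (j : ℕ) (ω : Ω) :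
    ∑ i ∈ Finset.Icc 1 (j + 1), f ((⇑θ.symm)^[i] (θ ω))
      = f ω + ∑ i ∈ Finset.Icc 1 j, f ((⇑θ.symm)^[i] ω) := by
  rw [← Finset.Ico_add_one_right_eq_Icc, ← Finset.Ico_add_one_right_eq_Icc, Finset.sum_Ico_eq_sum_range,
    Finset.sum_Ico_eq_sum_range]
  simp only [Nat.add_sub_cancel, Nat.succ_sub_one]
  have hL : ∀ i, f ((⇑θ.symm)^[1 + i] (θ ω)) = f ((⇑θ.symm)^[i] ω) := by
    intro i
    rw [Nat.add_comm 1 i, iter_symm_shift]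
  simp only [hL]
  rw [Finset.sum_range_succ']
  simp only [Function.iterate_zero_apply]
  have : ∀ i, (⇑θ.symm)^[i + 1] ω = (⇑θ.symm)^[1 + i] ω := by
    intro i; rw [Nat.add_comm]
  simp only [this]
  ring

lemma Sj_shift [MeasurableSpace Ω] (θ : Ω ≃ᵐ Ω) (σ D V τ : Ω → ℝ) (j : ℕ) (ω : Ω) :
    Sj (⇑θ.symm) σ D V τ (j + 1) (θ ω) = Sj (⇑θ.symm) σ D V τ j ω + V ω - τ ω := by
  unfold Sj
  rw [iter_symm_shift, sum_symm_shift, sum_symm_shift]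
  ring

lemma phi_le_max (σ D V τ : Ω → ℝ) (hV0 : ∀ ω, 0 ≤ V ω) (x : ℝ) (ω : Ω) :
    phi σ D V τ x ω ≤ max (max (x + V ω - τ ω) (σ ω + D ω + V ω - τ ω)) 0 := by
  unfold phi
  split_ifs with h1 h2 h3
  · exact le_max_of_le_left (le_max_of_le_right (by nlinarith [hV0 ω]))
  · exact max_le_max (le_max_of_le_right (by nlinarith [hV0 ω])) le_rfl
  · exact le_max_of_le_left (le_max_of_le_left (by nlinarith [hV0 ω]))
  · exact le_max_right _ _

lemma phi_step_le [MeasurableSpace Ω] (θ : Ω ≃ᵐ Ω) (σ D V τ : Ω → ℝ)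
    (hσ0 : ∀ ω, 0 ≤ σ ω) (hD0 : ∀ ω, 0 ≤ D ω) (hV0 : ∀ ω, 0 ≤ V ω)
    (x : ℝ) (ω : Ω) (hx : (x : EReal) ≤ Minf (⇑θ.symm) σ D V τ ω) :
    ((phi σ D V τ x ω : ℝ) : EReal) ≤ Minf (⇑θ.symm) σ D V τ (θ ω) := by
  set t := Minf (⇑θ.symm) σ D V τ (θ ω) with ht
  have hSle : ∀ j : ℕ, ((Sj (⇑θ.symm) σ D V τ (j + 1) (θ ω) : ℝ) : EReal) ≤ t := by
    intro j
    exact le_max_of_le_right (le_iSup (fun j => ((Sj (⇑θ.symm) σ D V τ (j + 1) (θ ω) : ℝ) : EReal)) j)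
  have h0t : (0 : EReal) ≤ t := le_max_left _ _
  have hS0 : Sj (⇑θ.symm) σ D V τ 0 ω = σ ω + D ω := by simp [Sj]
  have hsig : ((σ ω + D ω + V ω - τ ω : ℝ) : EReal) ≤ t := by
    have h := hSle 0
    rw [Sj_shift, hS0] at h
    exact h
  have hx' : ((x + V ω - τ ω : ℝ) : EReal) ≤ t := by
    rcases le_max_iff.mp hx with h | h
    · have hx0 : x ≤ 0 := by exact_mod_cast h
      refine le_trans ?_ hsig
      exact EReal.coe_le_coe_iff.mpr (by nlinarith [hσ0 ω, hD0 ω])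
    · have key := EReal_sup_add_aux x (V ω - τ ω)
        (fun j => Sj (⇑θ.symm) σ D V τ (j + 1) ω) t h
        (fun j => by
          have h2 := hSle (j + 1)
          rw [Sj_shift] at h2
          convert h2 using 2
          ring)
      convert key using 2
      ring
  have hreal : phi σ D V τ x ω ≤ max (max (x + V ω - τ ω) (σ ω + D ω + V ω - τ ω)) 0 :=
    phi_le_max σ D V τ hV0 x ω
  calc ((phi σ D V τ x ω : ℝ) : EReal)
      ≤ ((max (max (x + V ω - τ ω) (σ ω + D ω + V ω - τ ω)) 0 : ℝ) : EReal) :=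
        EReal.coe_le_coe_iff.mpr hreal
    _ ≤ t := by
        rcases max_cases (max (x + V ω - τ ω) (σ ω + D ω + V ω - τ ω)) (0 : ℝ) with
          ⟨heq, _⟩ | ⟨heq, _⟩
        · rw [heq]
          rcases max_cases (x + V ω - τ ω) (σ ω + D ω + V ω - τ ω) with ⟨h2, _⟩ | ⟨h2, _⟩
          · rw [h2]; exact hx'
          · rw [h2]; exact hsig
        · rw [heq]; exact_mod_cast h0t

/-- if E[V − τ] < 0 and W ≤ M_∞ P-a.s., then for every n,
Z_n^W ≤ M_∞ ∘ θⁿ P-a.s. -/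
theorem Zseq_le_Minf_shift
    [MeasurableSpace Ω] (P : Measure Ω) [IsProbabilityMeasure P]
    (θ : Ω ≃ᵐ Ω) (herg : Ergodic (⇑θ) P)
    (σ D V τ : Ω → ℝ)
    (hσm : Measurable σ) (hDm : Measurable D) (hVm : Measurable V) (hτm : Measurable τ)
    (hσ0 : ∀ ω, 0 ≤ σ ω) (hD0 : ∀ ω, 0 ≤ D ω) (hV0 : ∀ ω, 0 ≤ V ω) (hτ0 : ∀ ω, 0 ≤ τ ω)
    (hσi : Integrable σ P) (hDi : Integrable D P) (hVi : Integrable V P) (hτi : Integrable τ P)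
    (hτpos : ∀ᵐ ω ∂P, 0 < τ ω)
    (hEV : ∫ ω, (V ω - τ ω) ∂P < 0)
    (W : Ω → ℝ) (hWm : Measurable W) (hW0 : ∀ ω, 0 ≤ W ω)
    (hWMinf : ∀ᵐ ω ∂P, ((W ω : ℝ) : EReal) ≤ Minf (⇑θ.symm) σ D V τ ω) :
    ∀ n : ℕ, ∀ᵐ ω ∂P,
      ((Zseq (⇑θ) σ D V τ W n ω : ℝ) : EReal) ≤ Minf (⇑θ.symm) σ D V τ ((⇑θ)^[n] ω) := by
  intro n
  induction n with
  | zero => simpa [Zseq] using hWMinf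
  | succ n ih =>
    filter_upwards [ih] with ω hω
    have key := phi_step_le θ σ D V τ hσ0 hD0 hV0
      (Zseq (⇑θ) σ D V τ W n ω) ((⇑θ)^[n] ω) hω
    rw [Function.iterate_succ_apply']
    exact key
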